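/- Under the hypotheses of the Eisenstein-series formula (r continuous positive with absolutely convergent Fourier series of r^{2s}), only Fourier coefficients with index divisible by 4 contribute: Z_r(s) = Σ_{q∈ℤ} r̂^{2s}(4q) · Σ_{(m,n)≠(0,0)} e^{4iqθ(m,n)}/(m²+n²)^s for Re(s) > 1. -/

import Mathlib

/-- The polar angle of the lattice point `(m, n)`. -/
noncomputable def latAngle (p : ℤ × ℤ) : ℝ :=
  Complex.arg ((p.1 : ℂ) + (p.2 : ℂ) * Complex.I)

open Complex in
lemma aux_exp_arg (q : ℤ) (v : ℂ) (hv : v ≠ 0) :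
    Complex.exp ((q : ℂ) * (v.arg : ℂ) * Complex.I) = (v / (‖v‖ : ℂ)) ^ q := by
  have habs : (‖v‖ : ℂ) ≠ 0 := by
    simpa using hv
  have h1 : Complex.exp ((v.arg : ℂ) * Complex.I) = v / (‖v‖ : ℂ) := by
    rw [eq_div_iff habs, mul_comm]
    exact Complex.norm_mul_exp_arg_mul_I v
  rw [mul_assoc, Complex.exp_int_mul, h1]

lemma aux_z_ne (p : ℤ × ℤ) (hp : p ≠ 0) : ((p.1 : ℂ) + (p.2 : ℂ) * Complex.I) ≠ 0 := by
  intro h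
  apply hp
  have h1 := congrArg Complex.re h
  have h2 := congrArg Complex.im h
  simp at h1 h2
  exact Prod.ext (by exact_mod_cast h1) (by exact_mod_cast h2)

lemma aux_exp_rot (q : ℤ) (p : ℤ × ℤ) (hp : p ≠ 0) :
    Complex.exp ((q : ℂ) * (latAngle (-p.2, p.1) : ℂ) * Complex.I)
      = Complex.I ^ q * Complex.exp ((q : ℂ) * (latAngle p : ℂ) * Complex.I) := by
  have hz := aux_z_ne p hp
  have hrot : ((((-p.2 : ℤ)) : ℂ) + (p.1 : ℂ) * Complex.I)
      = Complex.I * ((p.1 : ℂ) + (p.2 : ℂ) * Complex.I) := by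
    simp [Complex.ext_iff]
  have hz' : ((((-p.2 : ℤ)) : ℂ) + (p.1 : ℂ) * Complex.I) ≠ 0 := by
    rw [hrot]; exact mul_ne_zero Complex.I_ne_zero hz
  rw [latAngle, latAngle, aux_exp_arg q _ hz', aux_exp_arg q _ hz, hrot]
  rw [norm_mul, Complex.norm_I, one_mul, mul_div_assoc, mul_zpow]

lemma aux_I_zpow_ne_one (q : ℤ) (hq : ¬ ((4:ℤ) ∣ q)) : Complex.I ^ q ≠ 1 := by
  have h4 : Complex.I ^ (4 : ℤ) = 1 := by
    norm_num [zpow_ofNat, pow_succ, Complex.I_mul_I]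
  have h0 : (0:ℤ) ≤ q % 4 := Int.emod_nonneg q (by norm_num)
  have h1 : q % 4 < 4 := Int.emod_lt_of_pos q (by norm_num)
  have hne : q % 4 ≠ 0 := fun h => hq (Int.dvd_of_emod_eq_zero h)
  have key : Complex.I ^ q = Complex.I ^ (q % 4) := by
    conv_lhs => rw [← Int.mul_ediv_add_emod q 4]
    rw [zpow_add₀ Complex.I_ne_zero, zpow_mul, h4, one_zpow, one_mul]
  rw [key]
  have e1 : Complex.I ^ (1:ℤ) = Complex.I := zpow_one _
  have e2 : Complex.I ^ (2:ℤ) = -1 := by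
    rw [show (2:ℤ) = ((2:ℕ):ℤ) from rfl, zpow_natCast, Complex.I_sq]
  have e3 : Complex.I ^ (3:ℤ) = -Complex.I := by
    rw [show (3:ℤ) = ((3:ℕ):ℤ) from rfl, zpow_natCast, pow_succ, Complex.I_sq]
    ring
  interval_cases h : q % 4
  · exact absurd rfl hne
  · rw [e1]; intro h; have := congrArg Complex.im h; simp at this
  · rw [e2]; intro h; rw [neg_eq_iff_eq_neg] at h; norm_num [Complex.ext_iff] at h
  · rw [e3]; intro h
    have := congrArg Complex.im h
    simp at this

lemma aux_Npos (p : ℤ × ℤ) (hp : p ≠ 0) : 0 < ((p.1 : ℝ)) ^ 2 + ((p.2 : ℝ)) ^ 2 := by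
  have h : p.1 ≠ 0 ∨ p.2 ≠ 0 := by
    by_contra h
    push_neg at h
    exact hp (Prod.ext h.1 h.2)
  rcases h with h | h
  · have h1 : ((p.1 : ℝ)) ≠ 0 := Int.cast_ne_zero.mpr h
    have : 0 < ((p.1 : ℝ)) ^ 2 := by positivity
    nlinarith [sq_nonneg ((p.2 : ℝ))]
  · have h1 : ((p.2 : ℝ)) ≠ 0 := Int.cast_ne_zero.mpr h
    have : 0 < ((p.2 : ℝ)) ^ 2 := by positivity
    nlinarith [sq_nonneg ((p.1 : ℝ))]

lemma aux_summable_rpow {σ : ℝ} (hσ : 1 < σ) :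
    Summable fun p : {p : ℤ × ℤ // p ≠ 0} =>
      (((p.1.1 : ℝ)) ^ 2 + ((p.1.2 : ℝ)) ^ 2) ^ (-σ) := by
  have h := EisensteinSeries.summable_one_div_norm_rpow (k := 2 * σ) (by linarith)
  have hinj : Function.Injective
      (fun p : {p : ℤ × ℤ // p ≠ 0} => (![p.1.1, p.1.2] : Fin 2 → ℤ)) := by
    intro a b hab
    have h0 := congrFun hab 0
    have h1 := congrFun hab 1
    simp at h0 h1
    exact Subtype.ext (Prod.ext h0 h1)
  have h2 := h.comp_injective hinj
  refine h2.of_nonneg_of_le (fun p => by positivity) (fun p => ?_)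
  set m : ℝ := (p.1.1 : ℝ)
  set n : ℝ := (p.1.2 : ℝ)
  have hM : ‖(![p.1.1, p.1.2] : Fin 2 → ℤ)‖ = max |m| |n| := by
    rw [EisensteinSeries.norm_eq_max_natAbs]
    push_cast [Nat.cast_natAbs]
    rfl
  have hMpos : 0 < max |m| |n| := by
    have := aux_Npos p.1 p.2
    rcases le_or_gt (max |m| |n|) 0 with h' | h'
    · exfalso
      have hm : |m| ≤ 0 := le_trans (le_max_left _ _) h'
      have hn : |n| ≤ 0 := le_trans (le_max_right _ _) h'
      have : m = 0 := abs_nonpos_iff.mp hm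
      have : n = 0 := abs_nonpos_iff.mp hn
      simp_all
    · exact h'
  have hle : (max |m| |n|) ^ 2 ≤ m ^ 2 + n ^ 2 := by
    rcases max_cases |m| |n| with ⟨h', _⟩ | ⟨h', _⟩ <;> rw [h'] <;>
      nlinarith [sq_abs m, sq_abs n, sq_nonneg m, sq_nonneg n]
  calc (m ^ 2 + n ^ 2) ^ (-σ) ≤ ((max |m| |n|) ^ 2) ^ (-σ) :=
        Real.rpow_le_rpow_of_nonpos (by positivity) hle (by linarith)
    _ = ‖(![p.1.1, p.1.2] : Fin 2 → ℤ)‖ ^ (-(2 * σ)) := by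
        rw [hM, ← Real.rpow_natCast (max |m| |n|) 2, ← Real.rpow_mul hMpos.le]
        norm_num

lemma aux_norm (s : ℂ) (p : {p : ℤ × ℤ // p ≠ 0}) (q : ℤ) :
    ‖Complex.exp ((q : ℂ) * (latAngle p.1 : ℂ) * Complex.I) /
        (((p.1.1 : ℂ)) ^ 2 + ((p.1.2 : ℂ)) ^ 2) ^ s‖
      = (((p.1.1 : ℝ)) ^ 2 + ((p.1.2 : ℝ)) ^ 2) ^ (-s.re) := by
  have hN := aux_Npos p.1 p.2
  have hden : (((p.1.1 : ℂ)) ^ 2 + ((p.1.2 : ℂ)) ^ 2)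
      = (((((p.1.1 : ℝ)) ^ 2 + ((p.1.2 : ℝ)) ^ 2) : ℝ) : ℂ) := by push_cast; ring
  have hnum : ((q : ℂ) * (latAngle p.1 : ℂ) * Complex.I)
      = (((q * latAngle p.1 : ℝ)) : ℂ) * Complex.I := by push_cast; ring
  rw [norm_div, hden, hnum,
    Complex.norm_exp_ofReal_mul_I, Complex.norm_cpow_eq_rpow_re_of_pos hN,
    Real.rpow_neg hN.le]
  rw [one_div]
/-- The rotation-by-π/2 equivalence on nonzero lattice points. -/
def rotEquiv : {p : ℤ × ℤ // p ≠ 0} ≃ {p : ℤ × ℤ // p ≠ 0} where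
  toFun p := ⟨(-p.1.2, p.1.1), by
    intro h
    apply p.2
    rw [Prod.ext_iff] at h ⊢
    simp at h ⊢
    exact ⟨h.2, h.1⟩⟩
  invFun p := ⟨(p.1.2, -p.1.1), by
    intro h
    apply p.2
    rw [Prod.ext_iff] at h ⊢
    simp at h ⊢
    exact ⟨h.2, h.1⟩⟩
  left_inv p := by ext <;> simp
  right_inv p := by ext <;> simp

lemma aux_vanish (s : ℂ) (q : ℤ) (hq : ¬ ((4:ℤ) ∣ q)) :
    ∑' p : {p : ℤ × ℤ // p ≠ 0},
      Complex.exp ((q : ℂ) * (latAngle p.1 : ℂ) * Complex.I) /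
        (((p.1.1 : ℂ)) ^ 2 + ((p.1.2 : ℂ)) ^ 2) ^ s = 0 := by
  set f : {p : ℤ × ℤ // p ≠ 0} → ℂ := fun p =>
    Complex.exp ((q : ℂ) * (latAngle p.1 : ℂ) * Complex.I) /
      (((p.1.1 : ℂ)) ^ 2 + ((p.1.2 : ℂ)) ^ 2) ^ s with hf
  have he : ∀ p, f (rotEquiv p) = Complex.I ^ q * f p := by
    intro p
    have hnum := aux_exp_rot q p.1 p.2
    have hden : ((((-p.1.2 : ℤ)) : ℂ)) ^ 2 + ((p.1.1 : ℂ)) ^ 2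
        = ((p.1.1 : ℂ)) ^ 2 + ((p.1.2 : ℂ)) ^ 2 := by push_cast; ring
    show Complex.exp ((q : ℂ) * (latAngle (-p.1.2, p.1.1) : ℂ) * Complex.I) /
        ((((-p.1.2 : ℤ) : ℂ)) ^ 2 + ((p.1.1 : ℂ)) ^ 2) ^ s = _
    rw [hnum, hden, mul_div_assoc]
  have h1 : ∑' p, f (rotEquiv p) = ∑' p, f p := rotEquiv.tsum_eq f
  rw [tsum_congr he, tsum_mul_left] at h1
  have h2 : (Complex.I ^ q - 1) * (∑' p, f p) = 0 := by
    rw [sub_mul, one_mul, h1, sub_self]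
  rcases mul_eq_zero.mp h2 with h | h
  · exact absurd (by linear_combination h) (aux_I_zpow_ne_one q hq)
  · exact h

/-- The Hlawka zeta function `Z_r(s) = Σ_{(m,n)≠(0,0)} r(θ(m,n))^{2s}/(m²+n²)^s`. -/
noncomputable def hlawkaZeta (r : ℝ → ℝ) (s : ℂ) : ℂ :=
  ∑' p : {p : ℤ × ℤ // p ≠ 0},
    ((r (latAngle p.1) : ℂ)) ^ (2 * s) /
      (((p.1.1 : ℂ)) ^ 2 + ((p.1.2 : ℂ)) ^ 2) ^ s

/-- The `q`-th Fourier coefficient of `θ ↦ r(θ)^{2s}`. -/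
noncomputable def fourierCoeff2s (r : ℝ → ℝ) (s : ℂ) (q : ℤ) : ℂ :=
  (1 / (2 * (Real.pi : ℂ))) *
    ∫ θ in (0 : ℝ)..(2 * Real.pi),
      ((r θ : ℂ)) ^ (2 * s) * Complex.exp (-(q : ℂ) * (θ : ℂ) * Complex.I)

/-- Eisenstein series formula (simplified version): only Fourier coefficients
with index divisible by 4 contribute, i.e.
`Z_r(s) = Σ_q r̂^{2s}(4q) · Σ_{(m,n)≠(0,0)} e^{4iqθ(m,n)}/(m²+n²)^s`
for `Re(s) > 1`. -/
theorem stmt_11 (r : ℝ → ℝ) (hr : Continuous r)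
    (hper : Function.Periodic r (2 * Real.pi)) (hpos : ∀ θ, 0 < r θ)
    (habs : ∀ s : ℂ, 1 < s.re → Summable (fun q : ℤ => ‖fourierCoeff2s r s q‖))
    (hfour : ∀ s : ℂ, 1 < s.re → ∀ θ : ℝ,
      HasSum (fun q : ℤ =>
        fourierCoeff2s r s q * Complex.exp ((q : ℂ) * (θ : ℂ) * Complex.I))
        (((r θ : ℂ)) ^ (2 * s)))
    (s : ℂ) (hs : 1 < s.re) :
    hlawkaZeta r s =
      ∑' q : ℤ, fourierCoeff2s r s (4 * q) *
        ∑' p : {p : ℤ × ℤ // p ≠ 0},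
          Complex.exp ((4 * q : ℂ) * (latAngle p.1 : ℂ) * Complex.I) /
            (((p.1.1 : ℂ)) ^ 2 + ((p.1.2 : ℂ)) ^ 2) ^ s := by
  have hσ : 1 < s.re := hs
  set F : ℤ × {p : ℤ × ℤ // p ≠ 0} → ℂ := fun x =>
    fourierCoeff2s r s x.1 * Complex.exp ((x.1 : ℂ) * (latAngle x.2.1 : ℂ) * Complex.I) /
      (((x.2.1.1 : ℂ)) ^ 2 + ((x.2.1.2 : ℂ)) ^ 2) ^ s with hF
  have hFnorm : Summable fun x => ‖F x‖ := by
    have h := ((habs s hs).mul_of_nonneg (aux_summable_rpow hσ)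
      (fun q => norm_nonneg _) (fun p => Real.rpow_nonneg (aux_Npos p.1 p.2).le _))
    refine h.congr fun x => ?_
    rw [hF]
    simp only
    rw [mul_div_assoc, norm_mul, aux_norm s x.2 x.1]
  have hFsum : Summable F := hFnorm.of_norm
  have step1 : hlawkaZeta r s = ∑' p : {p : ℤ × ℤ // p ≠ 0}, ∑' q : ℤ, F (q, p) := by
    unfold hlawkaZeta
    refine tsum_congr fun p => ?_
    exact ((hfour s hs (latAngle p.1)).div_const
      ((((p.1.1 : ℂ)) ^ 2 + ((p.1.2 : ℂ)) ^ 2) ^ s)).tsum_eq.symm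
  have step2 : ∑' p : {p : ℤ × ℤ // p ≠ 0}, ∑' q : ℤ, F (q, p)
      = ∑' q : ℤ, ∑' p : {p : ℤ × ℤ // p ≠ 0}, F (q, p) := Summable.tsum_comm hFsum
  set S : ℤ → ℂ := fun q => ∑' p : {p : ℤ × ℤ // p ≠ 0},
    Complex.exp ((q : ℂ) * (latAngle p.1 : ℂ) * Complex.I) /
      (((p.1.1 : ℂ)) ^ 2 + ((p.1.2 : ℂ)) ^ 2) ^ s with hS
  have step3 : ∀ q : ℤ, ∑' p : {p : ℤ × ℤ // p ≠ 0}, F (q, p)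
      = fourierCoeff2s r s q * S q := by
    intro q
    rw [hS]
    simp only
    rw [← tsum_mul_left]
    exact tsum_congr fun p => by rw [hF]; simp only [mul_div_assoc]
  have step4 : ∑' q : ℤ, fourierCoeff2s r s q * S q
      = ∑' q : ℤ, fourierCoeff2s r s (4 * q) * S (4 * q) := by
    symm
    refine Function.Injective.tsum_eq (g := fun q : ℤ => 4 * q)
      (f := fun q : ℤ => fourierCoeff2s r s q * S q)
      (fun a b h => by dsimp only at h; omega) ?_
    intro q hq
    rw [Function.mem_support] at hq
    by_contra hr
    apply hq
    have h4 : ¬ ((4:ℤ) ∣ q) := by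
      rintro ⟨k, hk⟩
      exact hr ⟨k, hk.symm⟩
    rw [hS]
    simp only
    rw [aux_vanish s q h4, mul_zero]
  rw [step1, step2, tsum_congr step3, step4]
  refine tsum_congr fun q => ?_
  congr 1
  rw [hS]
  simp only
  refine tsum_congr fun p => ?_
  congr 2
  push_cast
  ring
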